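/- For a random variable ξ with mean constraint |E[ξ] − u|² ≤ γ₁·Σ and second moment constraint E[(ξ−u)²] ≤ γ₂·Σ, where Σ > 0 and 0 ≤ γ₁ ≤ γ₂, the worst-case (over all such distributions) expectation of the linear function ξ ↦ a·ξ + b satisfies sup E[a·ξ + b] = a·u + |a|·sqrt(γ₁·Σ) + b. -/

import Mathlib

open MeasureTheory

lemma integrable_dirac' {f : ℝ → ℝ} (hf : Measurable f) (p : ℝ) :
    Integrable f (Measure.dirac p) := by
  have h : f =ᵐ[Measure.dirac p] fun _ => f p := by
    rw [Filter.EventuallyEq, ae_dirac_eq]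
    simp
  exact (integrable_congr h).mpr (integrable_const _)

/-- Worst-case expectation of an affine function over the moment ambiguity set:
`sup E[a·ξ + b] = a·u + |a|·√(γ₁Sg) + b`. -/
theorem worst_case_affine_expectation (u Sg γ₁ γ₂ a b : ℝ)
    (hSg : 0 < Sg) (hγ₁ : 0 ≤ γ₁) (hγ : γ₁ ≤ γ₂) :
    sSup {y : ℝ | ∃ μ : Measure ℝ, IsProbabilityMeasure μ ∧
        Integrable (fun x => x) μ ∧
        Integrable (fun x => (x - u) ^ 2) μ ∧
        ((∫ x, x ∂μ) - u) ^ 2 ≤ γ₁ * Sg ∧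
        (∫ x, (x - u) ^ 2 ∂μ) ≤ γ₂ * Sg ∧
        y = ∫ x, a * x + b ∂μ}
      = a * u + |a| * Real.sqrt (γ₁ * Sg) + b := by
  set s := Real.sqrt (γ₁ * Sg) with hs
  have hγSg : 0 ≤ γ₁ * Sg := mul_nonneg hγ₁ hSg.le
  have hs2 : s ^ 2 = γ₁ * Sg := Real.sq_sqrt hγSg
  have hsnn : 0 ≤ s := Real.sqrt_nonneg _
  apply IsGreatest.csSup_eq
  constructor
  · -- membership: dirac at p
    set p : ℝ := u + (if 0 ≤ a then s else -s) with hp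
    refine ⟨Measure.dirac p, Measure.dirac.isProbabilityMeasure, ?_, ?_, ?_, ?_, ?_⟩
    · exact integrable_dirac' measurable_id p
    · exact integrable_dirac' (by measurability) p
    · rw [integral_dirac]
      have : p - u = (if 0 ≤ a then s else -s) := by rw [hp]; ring
      rw [this]
      split <;> simp [hs2, neg_pow]
    · rw [integral_dirac]
      have : p - u = (if 0 ≤ a then s else -s) := by rw [hp]; ring
      rw [this]
      have : (if 0 ≤ a then s else -s) ^ 2 = γ₁ * Sg := by
        split <;> simp [hs2, neg_pow]
      rw [this]
      exact mul_le_mul_of_nonneg_right hγ hSg.le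
    · rw [integral_dirac]
      rw [hp]
      rcases le_or_gt 0 a with h | h
      · rw [if_pos h, abs_of_nonneg h]; ring
      · rw [if_neg (not_le.mpr h), abs_of_neg h]; ring
  · -- upper bound
    rintro y ⟨μ, hprob, hint, _, hmean, _, rfl⟩
    have hm : |(∫ x, x ∂μ) - u| ≤ s := by
      rw [hs, ← Real.sqrt_sq_eq_abs]
      exact Real.sqrt_le_sqrt hmean
    have h1 : a * ((∫ x, x ∂μ) - u) ≤ |a| * s := by
      calc a * ((∫ x, x ∂μ) - u) ≤ |a * ((∫ x, x ∂μ) - u)| := le_abs_self _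
        _ = |a| * |(∫ x, x ∂μ) - u| := abs_mul _ _
        _ ≤ |a| * s := mul_le_mul_of_nonneg_left hm (abs_nonneg a)
    rw [integral_add (hint.const_mul a) (integrable_const b), integral_const_mul,
      integral_const]
    have := hprob.measure_univ
    simp only [measure_univ, probReal_univ, ENNReal.toReal_one, smul_eq_mul, one_mul]
    nlinarith [h1]
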